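/- (Case II with a red nephew, resolution of deficiency) Suppose in a 2-3 red-black tree the node x is the black root of a deficient subtree and its sibling y is black and has a red child. Then performing the appropriate single or double rotation at the common parent of x and y, giving the new root of the rotated subtree the former parent's color and coloring its two children black, yields a subtree with the same inorder traversal in which all red-black properties hold, no node has two red children, and the number of black nodes on every path from its root to an external node equals the number before the deletion; the deficiency is fully resolved. -/
import Mathlib


inductive Color where
  | red : Color
  | black : Color
deriving DecidableEq

inductive RBTree (α : Type) where
  | nil : RBTree α
  | node : Color → RBTree α → α → RBTree α → RBTree α

namespace RBTree

variable {α : Type}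

/-- The color of a tree's root; external (nil) positions count as black. -/
def color : RBTree α → Color
  | .nil => Color.black
  | .node c _ _ _ => c

/-- Inorder traversal of the keys. -/
def inorder : RBTree α → List α
  | .nil => []
  | .node _ l k r => inorder l ++ k :: inorder r

/-- `BH t n`: every path from the root of `t` to an external node contains
exactly `n` black nodes (property (3)). -/
inductive BH : RBTree α → ℕ → Prop where
  | nil : BH RBTree.nil 0
  | red {l r : RBTree α} {k : α} {n : ℕ} :
      BH l n → BH r n → BH (RBTree.node Color.red l k r) n
  | black {l r : RBTree α} {k : α} {n : ℕ} :
      BH l n → BH r n → BH (RBTree.node Color.black l k r) (n + 1)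

/-- Property (2): every red node has black children (equivalently, a red node
never has a red parent). -/
def NoRedRed : RBTree α → Prop
  | .nil => True
  | .node c l _ r =>
      (c = Color.red → color l = Color.black ∧ color r = Color.black) ∧
      NoRedRed l ∧ NoRedRed r

/-- The 2-3 condition: no node has two red children. -/
def No2Red : RBTree α → Prop
  | .nil => True
  | .node _ l _ r =>
      ¬(color l = Color.red ∧ color r = Color.red) ∧ No2Red l ∧ No2Red r

/-- A red-black tree: black root, no red-red violation, uniform black counts. -/
def IsRB (t : RBTree α) : Prop :=
  color t = Color.black ∧ NoRedRed t ∧ ∃ n, BH t n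

/-- A 2-3 red-black tree: a red-black tree where no node has two red children. -/
def Is23RB (t : RBTree α) : Prop := IsRB t ∧ No2Red t

/-- Recolor the root black. -/
def setBlack : RBTree α → RBTree α
  | .nil => .nil
  | .node _ l k r => .node Color.black l k r

/-- `Occurs s t`: `s` occurs as a subtree of `t`. -/
inductive Occurs : RBTree α → RBTree α → Prop where
  | refl (t : RBTree α) : Occurs t t
  | left {s l : RBTree α} (c : Color) (k : α) (r : RBTree α) :
      Occurs s l → Occurs s (RBTree.node c l k r)
  | right {s r : RBTree α} (c : Color) (k : α) (l : RBTree α) :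
      Occurs s r → Occurs s (RBTree.node c l k r)

/-- `Replace s s' t t'`: `t'` is obtained from `t` by replacing one
occurrence of the subtree `s` by `s'`. -/
inductive Replace (s s' : RBTree α) : RBTree α → RBTree α → Prop where
  | here : Replace s s' s s'
  | left {l l' : RBTree α} (c : Color) (k : α) (r : RBTree α) :
      Replace s s' l l' → Replace s s' (RBTree.node c l k r) (RBTree.node c l' k r)
  | right {r r' : RBTree α} (c : Color) (k : α) (l : RBTree α) :
      Replace s s' r r' → Replace s s' (RBTree.node c l k r) (RBTree.node c l k r')

/-- The list of black-node counts along all root-to-external paths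
(in left-to-right order of the external nodes). -/
def bpaths : RBTree α → List ℕ
  | .nil => [0]
  | .node c l _ r =>
      (bpaths l ++ bpaths r).map (fun m => m + if c = Color.black then 1 else 0)

/-- Height: the maximum number of edges on a path from the root to an external node. -/
def height : RBTree α → ℕ
  | .nil => 0
  | .node _ l _ r => max (height l) (height r) + 1

/-- Number of internal nodes. -/
def size : RBTree α → ℕ
  | .nil => 0
  | .node _ l _ r => size l + size r + 1

end RBTree

open RBTree

/-- Case II with a red nephew: in a 2-3 red-black tree, `x` is
the black root of a deficient subtree (black-height `n`) and its sibling
`y = node black yl ky yr` is black and has a red child.  Performing the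
appropriate single (far red nephew) or double (near red nephew) rotation at
the common parent `p = node cp x kp y`, giving the new root of the rotated
subtree the former parent's color `cp` and coloring its two children black,
yields a subtree with the same inorder traversal in which all red-black
properties hold, no node has two red children, and the number of black nodes
on every path from its root to an external node equals the number before the
deletion, namely `n + 1` plus one if `cp` is black; the deficiency is fully
resolved. -/
theorem caseII_red_nephew_resolves
    {α : Type} (cp : Color) (x yl yr : RBTree α) (kp ky : α) (n : ℕ)
    (hxc : color x = Color.black) (hxrr : NoRedRed x) (hx2 : No2Red x)
    (hxbh : BH x n)
    (hyrr : NoRedRed (RBTree.node Color.black yl ky yr))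
    (hy2 : No2Red (RBTree.node Color.black yl ky yr))
    (hybh : BH (RBTree.node Color.black yl ky yr) (n + 1))
    (hred : color yl = Color.red ∨ color yr = Color.red) :
    -- far red nephew: single rotation
    (∀ (a : RBTree α) (wk : α) (b : RBTree α), yr = RBTree.node Color.red a wk b →
      inorder (RBTree.node cp (RBTree.node Color.black x kp yl) ky
                (RBTree.node Color.black a wk b)) =
        inorder (RBTree.node cp x kp (RBTree.node Color.black yl ky yr)) ∧
      NoRedRed (RBTree.node cp (RBTree.node Color.black x kp yl) ky
                (RBTree.node Color.black a wk b)) ∧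
      No2Red (RBTree.node cp (RBTree.node Color.black x kp yl) ky
                (RBTree.node Color.black a wk b)) ∧
      BH (RBTree.node cp (RBTree.node Color.black x kp yl) ky
                (RBTree.node Color.black a wk b))
        (n + 1 + if cp = Color.black then 1 else 0)) ∧
    -- near red nephew: double rotation
    (∀ (a : RBTree α) (wk : α) (b : RBTree α), yl = RBTree.node Color.red a wk b →
      inorder (RBTree.node cp (RBTree.node Color.black x kp a) wk
                (RBTree.node Color.black b ky yr)) =
        inorder (RBTree.node cp x kp (RBTree.node Color.black yl ky yr)) ∧
      NoRedRed (RBTree.node cp (RBTree.node Color.black x kp a) wk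
                (RBTree.node Color.black b ky yr)) ∧
      No2Red (RBTree.node cp (RBTree.node Color.black x kp a) wk
                (RBTree.node Color.black b ky yr)) ∧
      BH (RBTree.node cp (RBTree.node Color.black x kp a) wk
                (RBTree.node Color.black b ky yr))
        (n + 1 + if cp = Color.black then 1 else 0)) := by
  have hylbh : BH yl n := by cases hybh with | black h1 h2 => exact h1
  have hyrbh : BH yr n := by cases hybh with | black h1 h2 => exact h2
  obtain ⟨-, hylrr, hyrrr⟩ := hyrr
  obtain ⟨-, hyl2, hyr2⟩ := hy2
  constructor
  · rintro a wk b rfl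
    have ha : BH a n := by cases hyrbh with | red h1 h2 => exact h1
    have hb : BH b n := by cases hyrbh with | red h1 h2 => exact h2
    obtain ⟨hcc, harr, hbrr⟩ := hyrrr
    obtain ⟨hac, hbc⟩ := hcc rfl
    obtain ⟨-, ha2, hb2⟩ := hyr2
    refine ⟨by simp [color, inorder], ⟨by simp [color], ⟨by simp [color], hxrr, hylrr⟩, ⟨by simp [color], harr, hbrr⟩⟩,
      ⟨by simp [color], ⟨by simp [hxc], hx2, hyl2⟩, ⟨by simp [hac], ha2, hb2⟩⟩, ?_⟩
    cases cp <;> simp <;>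
      exact (by first
        | exact BH.red (BH.black hxbh hylbh) (BH.black ha hb)
        | exact BH.black (BH.black hxbh hylbh) (BH.black ha hb))
  · rintro a wk b rfl
    have ha : BH a n := by cases hylbh with | red h1 h2 => exact h1
    have hb : BH b n := by cases hylbh with | red h1 h2 => exact h2
    obtain ⟨hcc, harr, hbrr⟩ := hylrr
    obtain ⟨hac, hbc⟩ := hcc rfl
    obtain ⟨-, ha2, hb2⟩ := hyl2
    refine ⟨by simp [color, inorder], ⟨by simp [color], ⟨by simp [color], hxrr, harr⟩, ⟨by simp [color], hbrr, hyrrr⟩⟩,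
      ⟨by simp [color], ⟨by simp [hxc], hx2, ha2⟩, ⟨by simp [hbc], hb2, hyr2⟩⟩, ?_⟩
    cases cp <;> simp <;>
      exact (by first
        | exact BH.red (BH.black hxbh ha) (BH.black hb hyrbh)
        | exact BH.black (BH.black hxbh ha) (BH.black hb hyrbh))
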